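/- Let p be a prime, β ≥ 2 an integer, and a, b nonnegative integers with 2a + 3b = β. Then 1 + (30a − 63b)·B_{4β}·(1 + p^{2β})/β ≠ 0, where the expression is computed in the rational numbers. -/

import Mathlib

open Real Nat

lemma bern_bound (k : ℕ) (hk : k ≠ 0) :
    ((2 * k)! : ℝ) ≤ (-1) ^ (k + 1) * (bernoulli (2 * k) : ℝ) * (2 ^ (2 * k - 1) * π ^ (2 * k)) := by
  have hs := hasSum_zeta_nat (k := k) hk
  have h1 : (1 : ℝ) ≤ (-1 : ℝ) ^ (k + 1) * 2 ^ (2 * k - 1) * π ^ (2 * k) *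
      (bernoulli (2 * k) : ℝ) / (2 * k)! := by
    have := le_hasSum hs 1 (fun i _ => by positivity)
    simpa using this
  have hfac : (0 : ℝ) < (2 * k)! := by positivity
  rw [le_div_iff₀ hfac] at h1
  linarith [h1]

lemma fac_bound : ∀ β : ℕ, 3 ≤ β → β * 392 ^ β < 3 * (4 * β)! := by
  intro β hβ
  induction β, hβ using Nat.le_induction with
  | base => norm_num [Nat.factorial]
  | succ n hn ih =>
    have hf : (4 * (n + 1))! = (4 * n + 4) * ((4 * n + 3) * ((4 * n + 2) * ((4 * n + 1) * (4 * n)!))) := by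
      have e1 : (4 * (n+1))! = (4*n+4) * (4*n+3)! := by
        rw [show 4*(n+1) = (4*n+3)+1 by ring, Nat.factorial_succ]
      have e2 : (4*n+3)! = (4*n+3) * (4*n+2)! := Nat.factorial_succ _
      have e3 : (4*n+2)! = (4*n+2) * (4*n+1)! := Nat.factorial_succ _
      have e4 : (4*n+1)! = (4*n+1) * (4*n)! := Nat.factorial_succ _
      rw [e1, e2, e3, e4]
    have h1 : (n + 1) * 392 ^ (n + 1) ≤ 784 * (n * 392 ^ n) := by
      rw [pow_succ]
      calc (n + 1) * (392 ^ n * 392) = 392 * ((n+1) * 392 ^ n) := by ring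
        _ ≤ 392 * (2 * n * 392 ^ n) := by gcongr <;> omega
        _ = 784 * (n * 392 ^ n) := by ring
    have h2 : 784 * (n * 392 ^ n) < 784 * (3 * (4 * n)!) := by gcongr <;> norm_num
    have h3 : 784 * (3 * (4 * n)!) ≤ 3 * (4 * (n+1))! := by
      rw [hf]
      calc 784 * (3 * (4*n)!) = 3 * (4 * (14 * (14 * (1 * (4*n)!)))) := by ring
        _ ≤ 3 * ((4*n+4) * ((4*n+3) * ((4*n+2) * ((4*n+1) * (4*n)!)))) := by
            gcongr <;> omega
    exact lt_of_le_of_lt h1 (lt_of_lt_of_le h2 h3)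

set_option maxHeartbeats 2000000 in
theorem stmt15 (p : ℕ) (hp : p.Prime) (β : ℕ) (hβ : 2 ≤ β)
    (a b : ℕ) (hab : 2 * a + 3 * b = β) :
    (1 : ℚ) + ((30 * a : ℚ) - 63 * b) * bernoulli (4 * β) * (1 + (p : ℚ) ^ (2 * β)) / (β : ℚ)
      ≠ 0 := by
  intro h
  have hp2 : 2 ≤ p := hp.two_le
  have hβR : (0 : ℝ) < (β : ℝ) := by
    have : 0 < β := by omega
    exact_mod_cast this
  -- cast hypothesis to ℝ
  have hR : (1 : ℝ) + ((30 * a : ℝ) - 63 * b) * (bernoulli (4 * β) : ℝ)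
      * (1 + (p : ℝ) ^ (2 * β)) / (β : ℝ) = 0 := by
    exact_mod_cast congrArg (fun q : ℚ => (q : ℝ)) h
  set B : ℝ := (bernoulli (4 * β) : ℝ) with hBdef
  set c : ℝ := (30 * a : ℝ) - 63 * b with hcdef
  set P : ℝ := 1 + (p : ℝ) ^ (2 * β) with hPdef
  -- Bernoulli bound
  have hBb := bern_bound (2 * β) (by omega)
  rw [show 2 * (2 * β) = 4 * β by ring] at hBb
  have hodd : ((-1 : ℝ)) ^ (2 * β + 1) = -1 := Odd.neg_one_pow ⟨β, by ring⟩
  rw [hodd] at hBb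
  have hB : ((4 * β)! : ℝ) ≤ (-B) * (2 ^ (4 * β - 1) * π ^ (4 * β)) := by
    rw [hBdef]; linarith [hBb]
  have hMpos : (0 : ℝ) < 2 ^ (4 * β - 1) * π ^ (4 * β) := by positivity
  have hfacpos : (0 : ℝ) < ((4 * β)! : ℝ) := by positivity
  have hBneg : 0 < -B := by
    by_contra hcon
    push_neg at hcon
    nlinarith [hB, hMpos, hfacpos]
  have hPpow : (4 : ℝ) ^ β ≤ P := by
    have h1 : (2 : ℝ) ^ (2 * β) ≤ (p : ℝ) ^ (2 * β) := by
      apply pow_le_pow_left₀ (by norm_num)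
      exact_mod_cast hp2
    have h2 : (4 : ℝ) ^ β = 2 ^ (2 * β) := by
      rw [show (4 : ℝ) = 2 ^ 2 by norm_num, ← pow_mul]
    rw [hPdef]; linarith
  have hPpos : 0 < P := lt_of_lt_of_le (by positivity) hPpow
  -- pi bound
  have hpi4 : π ^ 4 < 98 := by
    have h1 : π < 3.1416 := by linarith [pi_lt_d6]
    have h2 : π ^ 2 < 9.87 := by nlinarith [pi_pos]
    nlinarith [pi_pos, sq_nonneg π]
  rcases lt_trichotomy (63 * b) (30 * a) with hlt | heq | hgt
  · -- c > 0 : the main case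
    have hc3 : (3 : ℝ) ≤ c := by
      have hn : 63 * b + 3 ≤ 30 * a := by omega
      have : ((63 * b + 3 : ℕ) : ℝ) ≤ ((30 * a : ℕ) : ℝ) := by exact_mod_cast hn
      push_cast at this
      rw [hcdef]; linarith
    -- from hR : c * B * P = -β
    have hX : c * (-B) * P = (β : ℝ) := by
      have h0 : c * B * P / β = -1 := by linarith [hR]
      have h1 : c * B * P = -β := by
        field_simp at h0; linarith
      linarith [h1]  -- c*(-B)*P = -(c*B*P) = β
    rcases Nat.lt_or_ge β 3 with hβ2 | hβ3
    · -- β = 2, forces a = 1, b = 0, c = 30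
      have hβeq : β = 2 := by omega
      subst hβeq
      have hb0 : b = 0 ∧ a = 1 := by omega
      obtain ⟨hb, ha⟩ := hb0
      subst hb; subst ha
      have hc : c = 30 := by rw [hcdef]; norm_num
      have hP17 : (17 : ℝ) ≤ P := by
        have : (4 : ℝ) ^ 2 ≤ (p:ℝ) ^ (2*2) := by
          have h1 : (2 : ℝ) ^ (2 * 2) ≤ (p : ℝ) ^ (2 * 2) := by
            apply pow_le_pow_left₀ (by norm_num); exact_mod_cast hp2
          norm_num at h1 ⊢; linarith
        rw [hPdef]; norm_num at this ⊢; linarith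
      -- hB : 40320 ≤ (-B) * (2^7 * π^8) ; hX : 30 * (-B) * P = 2
      rw [hc] at hX
      norm_num [Nat.factorial] at hB hX
      -- -B ≤ 2/510 from hX, P ≥ 17
      have hBsmall : (-B) * 510 ≤ 2 := by
        have hm : 30 * (-B) * 17 ≤ 30 * (-B) * P :=
          mul_le_mul_of_nonneg_left hP17 (by positivity)
        linarith
      have hpi8 : π ^ 8 < 9604 := by
        calc π ^ 8 = (π ^ 4) ^ 2 := by ring
          _ < 98 ^ 2 := by
              apply pow_lt_pow_left₀ hpi4 (by positivity)
              norm_num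
          _ = 9604 := by norm_num
      have hm2 : (-B) * π ^ 8 ≤ (-B) * 9604 := by
        apply mul_le_mul_of_nonneg_left hpi8.le hBneg.le
      linarith
    · -- β ≥ 3
      have hkey : (β : ℝ) * 392 ^ β < 3 * ((4 * β)! : ℝ) := by
        exact_mod_cast fac_bound β hβ3
      set M : ℝ := 2 ^ (4 * β - 1) * π ^ (4 * β) with hMdef
      have hpib : π ^ (4 * β) ≤ 98 ^ β := by
        rw [show 4 * β = 4 * β from rfl, pow_mul]
        exact pow_le_pow_left₀ (by positivity) hpi4.le β
      have h2b : (2 : ℝ) ^ (4 * β - 1) ≤ 16 ^ β := by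
        calc (2 : ℝ) ^ (4 * β - 1) ≤ 2 ^ (4 * β) :=
              pow_le_pow_right₀ (by norm_num) (by omega)
          _ = 16 ^ β := by rw [show (16:ℝ) = 2^4 by norm_num, ← pow_mul]
      have step1 : (β : ℝ) * M < 3 * ((4 * β)! : ℝ) * 4 ^ β := by
        have e1 : (β : ℝ) * M ≤ (β : ℝ) * (16 ^ β * 98 ^ β) := by
          rw [hMdef]
          apply mul_le_mul_of_nonneg_left _ hβR.le
          apply mul_le_mul h2b hpib (by positivity) (by positivity)
        have e2 : (16 : ℝ) ^ β * 98 ^ β = 392 ^ β * 4 ^ β := by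
          rw [← mul_pow, ← mul_pow]; norm_num
        have e3 : (β : ℝ) * (392 ^ β * 4 ^ β) < 3 * ((4 * β)! : ℝ) * 4 ^ β := by
          have h4pos : (0:ℝ) < 4 ^ β := by positivity
          calc (β : ℝ) * (392 ^ β * 4 ^ β) = ((β : ℝ) * 392 ^ β) * 4 ^ β := by ring
            _ < (3 * ((4 * β)! : ℝ)) * 4 ^ β := by
                exact mul_lt_mul_of_pos_right hkey h4pos
            _ = 3 * ((4 * β)! : ℝ) * 4 ^ β := by ring
        calc (β : ℝ) * M ≤ (β : ℝ) * (392 ^ β * 4 ^ β) := by rw [← e2]; exact e1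
          _ < 3 * ((4 * β)! : ℝ) * 4 ^ β := e3
      have step2 : 3 * ((4 * β)! : ℝ) * 4 ^ β ≤ c * (-B) * P * M := by
        calc 3 * ((4 * β)! : ℝ) * 4 ^ β ≤ 3 * ((-B) * M) * 4 ^ β := by
              apply mul_le_mul_of_nonneg_right _ (by positivity)
              apply mul_le_mul_of_nonneg_left hB (by norm_num)
          _ ≤ c * ((-B) * M) * P := by
              have hBM : 0 ≤ (-B) * M := by positivity
              apply mul_le_mul
              · exact mul_le_mul_of_nonneg_right hc3 hBM
              · exact hPpow
              · positivity
              · nlinarith [hBM, hc3]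
          _ = c * (-B) * P * M := by ring
      have : (β : ℝ) * M < (β : ℝ) * M := by
        calc (β : ℝ) * M < 3 * ((4 * β)! : ℝ) * 4 ^ β := step1
          _ ≤ c * (-B) * P * M := step2
          _ = (β : ℝ) * M := by rw [hX]
      exact lt_irrefl _ this
  · -- c = 0
    have hc0 : c = 0 := by
      rw [hcdef]
      have : ((63 * b : ℕ) : ℝ) = ((30 * a : ℕ) : ℝ) := by exact_mod_cast heq
      push_cast at this; linarith
    rw [hc0] at hR
    norm_num at hR
  · -- c < 0
    have hcneg : c < 0 := by
      rw [hcdef]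
      have : ((30 * a : ℕ) : ℝ) < ((63 * b : ℕ) : ℝ) := by exact_mod_cast hgt
      push_cast at this; linarith
    have hpos : 0 < c * B * P / β := by
      apply div_pos _ hβR
      have : 0 < (-c) * (-B) * P := by
        apply mul_pos (mul_pos (by linarith) hBneg) hPpos
      nlinarith [this]
    linarith [hR, hpos]
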